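/- Let G be an abelian group of order 4t+2, D ⊆ G a k-subset with characteristic function χ : G → GF(2), and φ(x) = (-1)^{χ(x)}. Then the coboundary ∂φ is quasi-orthogonal if and only if φ is an optimal binary array, i.e., R_φ(g) = ±2 for all g ∈ G∖{0}. -/
import Mathlib


/-- for `G` abelian of order `4t+2`, `D ⊆ G` a `k`-subset with
GF(2) characteristic function `χ` and `φ(x) = (-1)^{χ(x)}`, the coboundary
`∂φ` is quasi-orthogonal (row excess `8t+2`) iff `φ` is an optimal binary
array: `R_φ(g) = ±2` for all `g ≠ 0`. -/
theorem stmt_11 (t k : ℕ) (ht : 1 ≤ t) (G : Type*) [AddCommGroup G]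
    [Fintype G] [DecidableEq G] (hG : Fintype.card G = 4 * t + 2)
    (χ : G → ZMod 2) (D : Finset G)
    (hD : D = Finset.univ.filter fun x => χ x = 1) (hk : D.card = k)
    (φ : G → ℤ) (hφ : ∀ x, φ x = (-1 : ℤ) ^ (χ x).val) :
    (∑ g ∈ Finset.univ.erase (0 : G), |∑ h : G, φ g * φ h * φ (g + h)|)
        = 8 * t + 2 ↔
      ∀ g : G, g ≠ 0 →
        (∑ a : G, φ a * φ (a + g)) = 2 ∨ (∑ a : G, φ a * φ (a + g)) = -2 := by
  set R : G → ℤ := fun g => ∑ a : G, φ a * φ (a + g) with hRdef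
  have habs : ∀ x, |φ x| = 1 := by
    intro x
    rw [hφ]
    rcases Nat.even_or_odd (χ x).val with h | h
    · rw [h.neg_one_pow]; simp
    · rw [h.neg_one_pow]; simp
  have hSabs : ∀ g : G, |∑ h : G, φ g * φ h * φ (g + h)| = |R g| := by
    intro g
    have : (∑ h : G, φ g * φ h * φ (g + h)) = φ g * ∑ h : G, φ h * φ (g + h) := by
      rw [Finset.mul_sum]; exact Finset.sum_congr rfl fun h _ => by ring
    rw [this, abs_mul, habs, one_mul, hRdef]
    congr 1
    exact Finset.sum_congr rfl fun h _ => by rw [add_comm g h]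
  -- key congruence : R g = 4 q + 2
  have key : ∀ g : G, ∃ q : ℤ, R g = 4 * q + 2 := by
    intro g
    have hterm : ∀ c d : ZMod 2,
        ((-1 : ℤ)) ^ c.val * (-1) ^ d.val = 1 - 2 * ((c + d).val : ℤ) := by decide
    have hRform : R g = ∑ a : G, (1 - 2 * (((χ a + χ (a + g)).val : ℤ))) := by
      refine Finset.sum_congr rfl fun a _ => ?_
      rw [hφ, hφ, hterm]
    set M : ℕ := ∑ a : G, (χ a + χ (a + g)).val with hM
    have hRM : R g = (Fintype.card G : ℤ) - 2 * M := by
      rw [hRform, Finset.sum_sub_distrib]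
      simp [hM, Finset.mul_sum, Finset.card_univ]
    have hMeven : Even M := by
      have hmod : M % 2 = (∑ a : G, ((χ a).val + (χ (a + g)).val)) % 2 := by
        rw [hM, Finset.sum_nat_mod, Finset.sum_nat_mod
          (Finset.univ) _ (fun a => (χ a).val + (χ (a + g)).val)]
        congr 1
        refine Finset.sum_congr rfl fun a _ => ?_
        rw [ZMod.val_add]
        omega
      have hshift : (∑ a : G, (χ (a + g)).val) = ∑ a : G, (χ a).val := by
        exact Fintype.sum_equiv (Equiv.addRight g) _ _ (fun a => rfl)
      rw [Finset.sum_add_distrib, hshift] at hmod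
      refine Nat.even_iff.mpr ?_
      omega
    obtain ⟨m, hm⟩ := hMeven
    refine ⟨(t : ℤ) - m, ?_⟩
    rw [hRM, hG, hm]
    push_cast
    ring
  have hiff : ∀ g : G, |R g| = 2 ↔ (R g = 2 ∨ R g = -2) := by
    intro g
    rcases abs_cases (R g) with ⟨h1, h2⟩ | ⟨h1, h2⟩ <;> omega
  have hge : ∀ g : G, 2 ≤ |R g| := by
    intro g
    obtain ⟨q, hq⟩ := key g
    rcases abs_cases (R g) with ⟨h1, h2⟩ | ⟨h1, h2⟩ <;> omega
  have hcard : (Finset.univ.erase (0 : G)).card = 4 * t + 1 := by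
    rw [Finset.card_erase_of_mem (Finset.mem_univ 0), Finset.card_univ, hG]
    omega
  have hsum_eq : (∑ g ∈ Finset.univ.erase (0 : G), |∑ h : G, φ g * φ h * φ (g + h)|)
      = ∑ g ∈ Finset.univ.erase (0 : G), |R g| :=
    Finset.sum_congr rfl fun g _ => hSabs g
  rw [hsum_eq]
  constructor
  · intro hsum g hg
    have hg' : g ∈ Finset.univ.erase (0 : G) :=
      Finset.mem_erase.mpr ⟨hg, Finset.mem_univ g⟩
    have hzero : (∑ g ∈ Finset.univ.erase (0 : G), (|R g| - 2)) = 0 := by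
      rw [Finset.sum_sub_distrib, hsum, Finset.sum_const, hcard]
      push_cast
      ring
    have := (Finset.sum_eq_zero_iff_of_nonneg
      (fun g _ => by linarith [hge g])).mp hzero g hg'
    exact (hiff g).mp (by omega)
  · intro hall
    have : ∀ g ∈ Finset.univ.erase (0 : G), |R g| = 2 := by
      intro g hg
      exact (hiff g).mpr (hall g (Finset.mem_erase.mp hg).1)
    rw [Finset.sum_congr rfl this, Finset.sum_const, hcard]
    push_cast
    ring
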